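/- arXiv:1604.04484 — 4 statements merged into one kernel-verified Lean document; each statement's English description precedes it below -/
import Mathlib

section
/- Let μ ∈ ℝⁿ and y, y' ∈ ℝⁿ with y and y' differing in at most k coordinates, where all coordinates of y and y' lie in [0,1]. Define for each j: u_j = max(μ_j(1 - y_j), μ_j(0 - y_j)) and l_j = min(μ_j(1 - y_j), μ_j(0 - y_j)). Let U_k be the sum of the k largest values among u_1,…,u_n and L_k be the sum of the k smallest values among l_1,…,l_n. Then μ·y + L_k ≤ μ·y' ≤ μ·y + U_k. -/
/-- If `y` and `y'` have coordinates in `[0,1]` and differ in at most `k`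
coordinates, then `μ·y + L_k ≤ μ·y' ≤ μ·y + U_k`, where `U_k` is the sum of the `k`
largest values among the `u_j` (equivalently the greatest size-`k` subset sum) and
`L_k` the sum of the `k` smallest values among the `l_j`. -/
theorem stmt0 {n k : ℕ} (μ y y' : Fin n → ℝ)
    (hy : ∀ j, y j ∈ Set.Icc (0:ℝ) 1) (hy' : ∀ j, y' j ∈ Set.Icc (0:ℝ) 1)
    (hk : k ≤ n)
    (hdiff : {j | y j ≠ y' j}.ncard ≤ k)
    (u l : Fin n → ℝ)
    (hu : ∀ j, u j = max (μ j * (1 - y j)) (μ j * (0 - y j)))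
    (hl : ∀ j, l j = min (μ j * (1 - y j)) (μ j * (0 - y j)))
    (U L : ℝ)
    (hU : IsGreatest {v | ∃ S : Finset (Fin n), S.card = k ∧ v = ∑ j ∈ S, u j} U)
    (hL : IsLeast {v | ∃ S : Finset (Fin n), S.card = k ∧ v = ∑ j ∈ S, l j} L) :
    (∑ j, μ j * y j) + L ≤ ∑ j, μ j * y' j ∧
      (∑ j, μ j * y' j) ≤ (∑ j, μ j * y j) + U := by
  classical
  set D : Finset (Fin n) := Finset.univ.filter (fun j => y j ≠ y' j) with hD
  have hDcard : D.card ≤ k := by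
    have : {j | y j ≠ y' j} = (D : Set (Fin n)) := by
      ext j; simp [hD]
    rw [this, Set.ncard_coe_finset] at hdiff
    exact hdiff
  obtain ⟨S, hDS, hScard⟩ :=
    Finset.exists_superset_card_eq hDcard (by simpa using hk)
  -- pointwise bounds
  have hbound : ∀ j, l j ≤ μ j * (y' j - y j) ∧ μ j * (y' j - y j) ≤ u j := by
    intro j
    obtain ⟨h0, h1⟩ := hy' j
    rw [hl, hu]
    rcases le_total 0 (μ j) with hμ | hμ
    · constructor
      · exact le_trans (min_le_right _ _) (by nlinarith)
      · exact le_trans (by nlinarith) (le_max_left _ _)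
    · constructor
      · exact le_trans (min_le_left _ _) (by nlinarith)
      · exact le_trans (by nlinarith) (le_max_right _ _)
  have hzero : ∀ j ∉ D, μ j * (y' j - y j) = 0 := by
    intro j hj
    have : y j = y' j := by
      by_contra h; exact hj (by simp [hD, h])
    simp [this]
  have hdiffsum : (∑ j, μ j * y' j) - ∑ j, μ j * y j = ∑ j ∈ S, μ j * (y' j - y j) := by
    rw [← Finset.sum_sub_distrib]
    have h1 : ∑ j, (μ j * y' j - μ j * y j) = ∑ j, μ j * (y' j - y j) := by
      apply Finset.sum_congr rfl; intro j _; ring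
    rw [h1]
    rw [← Finset.sum_subset (Finset.subset_univ S)]
    intro j _ hj
    exact hzero j (fun hjD => hj (hDS hjD))
  have hLS : L ≤ ∑ j ∈ S, l j := hL.2 ⟨S, hScard, rfl⟩
  have hUS : ∑ j ∈ S, u j ≤ U := hU.2 ⟨S, hScard, rfl⟩
  have hls : ∑ j ∈ S, l j ≤ ∑ j ∈ S, μ j * (y' j - y j) :=
    Finset.sum_le_sum (fun j _ => (hbound j).1)
  have hus : ∑ j ∈ S, μ j * (y' j - y j) ≤ ∑ j ∈ S, u j :=
    Finset.sum_le_sum (fun j _ => (hbound j).2)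
  constructor <;> linarith
end

section
/- Let μ ∈ ℝⁿ, y ∈ {0,1}ⁿ, and c ∈ ℝ. Define d(c) = min over y' ∈ [0,1]ⁿ with μ·y' = c of the number of coordinates where y and y' differ (if such y' exists). With u_j = max(μ_j(1-y_j), -μ_j y_j), l_j = min(μ_j(1-y_j), -μ_j y_j), U_k = sum of the k largest u_j, L_k = sum of the k smallest l_j, and U_0 = L_0 = 0: d(c) ≤ k if and only if μ·y + L_k ≤ c ≤ μ·y + U_k. -/
lemma coord_bound (μj yj t : ℝ) (hy : yj = 0 ∨ yj = 1) (ht0 : 0 ≤ t) (ht1 : t ≤ 1) :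
    min (μj * (1 - yj)) (-(μj * yj)) ≤ μj * (t - yj) ∧
    μj * (t - yj) ≤ max (μj * (1 - yj)) (-(μj * yj)) := by
  rcases hy with rfl | rfl <;> rcases le_or_gt 0 μj with hμ | hμ <;>
    simp only [mul_zero, neg_zero, mul_one, sub_zero, sub_self, zero_mul] <;>
    constructor
  · exact le_trans (min_le_right _ _) (by nlinarith)
  · exact le_trans (by nlinarith) (le_max_left _ _)
  · exact le_trans (min_le_left _ _) (by nlinarith)
  · exact le_trans (by nlinarith) (le_max_right _ _)
  · exact le_trans (min_le_right _ _) (by nlinarith)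
  · exact le_trans (by nlinarith) (le_max_left _ _)
  · exact le_trans (min_le_left _ _) (by nlinarith)
  · exact le_trans (by nlinarith) (le_max_right _ _)

lemma coord_mem (μj yj δ : ℝ) (hy : yj = 0 ∨ yj = 1) (hμ : μj ≠ 0)
    (h1 : min (μj * (1 - yj)) (-(μj * yj)) ≤ δ)
    (h2 : δ ≤ max (μj * (1 - yj)) (-(μj * yj))) :
    0 ≤ yj + δ / μj ∧ yj + δ / μj ≤ 1 := by
  have hδμ : δ = (δ / μj) * μj := (div_mul_cancel₀ δ hμ).symm
  rcases hy with rfl | rfl <;> rcases lt_or_gt_of_ne hμ with hμ' | hμ' <;>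
    simp only [mul_zero, neg_zero, mul_one, sub_zero, sub_self, zero_mul] at h1 h2
  · rw [min_eq_left hμ'.le] at h1; rw [max_eq_right hμ'.le] at h2
    constructor <;> nlinarith
  · rw [min_eq_right hμ'.le] at h1; rw [max_eq_left hμ'.le] at h2
    constructor <;> nlinarith
  · rw [min_eq_left (by linarith : (0:ℝ) ≤ -μj)] at h1
    rw [max_eq_right (by linarith : (0:ℝ) ≤ -μj)] at h2
    constructor <;> nlinarith
  · rw [min_eq_right (by linarith : -μj ≤ (0:ℝ))] at h1
    rw [max_eq_left (by linarith : -μj ≤ (0:ℝ))] at h2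
    constructor <;> nlinarith


lemma build {n : ℕ} (μ y u l : Fin n → ℝ) (hy : ∀ j, y j = 0 ∨ y j = 1)
    (hu : ∀ j, u j = max (μ j * (1 - y j)) (-(μ j * y j)))
    (hl : ∀ j, l j = min (μ j * (1 - y j)) (-(μ j * y j)))
    (S : Finset (Fin n)) (δ : ℝ)
    (h1 : ∑ j ∈ S, l j ≤ δ) (h2 : δ ≤ ∑ j ∈ S, u j) :
    ∃ y' : Fin n → ℝ, (∀ j, y' j ∈ Set.Icc (0:ℝ) 1) ∧
      (∑ j, μ j * y' j) = (∑ j, μ j * y j) + δ ∧ {j | y j ≠ y' j} ⊆ ↑S := by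
  have hlu : ∀ j, l j ≤ u j := fun j => by rw [hu j, hl j]; exact min_le_max
  have hsum_le : ∑ j ∈ S, l j ≤ ∑ j ∈ S, u j :=
    Finset.sum_le_sum fun j _ => hlu j
  have hexs : ∃ s : ℝ, 0 ≤ s ∧ s ≤ 1 ∧ ∑ j ∈ S, (l j + s * (u j - l j)) = δ := by
    rcases eq_or_lt_of_le hsum_le with heq | hlt
    · refine ⟨0, le_refl 0, zero_le_one, ?_⟩
      simp only [zero_mul, add_zero]
      linarith
    · refine ⟨(δ - ∑ j ∈ S, l j) / (∑ j ∈ S, u j - ∑ j ∈ S, l j),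
        div_nonneg (by linarith) (by linarith), ?_, ?_⟩
      · rw [div_le_one (by linarith)]; linarith
      · rw [Finset.sum_add_distrib, ← Finset.mul_sum, Finset.sum_sub_distrib,
          div_mul_cancel₀ _ (by linarith : (∑ j ∈ S, u j - ∑ j ∈ S, l j) ≠ 0)]
        ring
  obtain ⟨s, hs0, hs1, hsum⟩ := hexs
  set δf : Fin n → ℝ := fun j => l j + s * (u j - l j) with hδf
  have hδfl : ∀ j, l j ≤ δf j := fun j => by simp only [hδf]; nlinarith [hlu j]
  have hδfu : ∀ j, δf j ≤ u j := fun j => by simp only [hδf]; nlinarith [hlu j]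
  refine ⟨fun j => if j ∈ S ∧ μ j ≠ 0 then y j + δf j / μ j else y j, ?_, ?_, ?_⟩
  · intro j
    dsimp only
    split_ifs with h
    · obtain ⟨-, hμ⟩ := h
      have := coord_mem (μ j) (y j) (δf j) (hy j) hμ
        ((hl j) ▸ hδfl j) ((hu j) ▸ hδfu j)
      exact ⟨this.1, this.2⟩
    · rcases hy j with h0 | h0 <;> rw [h0] <;> constructor <;> norm_num
  · have key : ∀ j, μ j * (if j ∈ S ∧ μ j ≠ 0 then y j + δf j / μ j else y j)
        = μ j * y j + (if j ∈ S then δf j else 0) := by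
      intro j
      by_cases hμ : μ j = 0
      · have hl0 : l j = 0 := by rw [hl j, hμ]; simp
        have hu0 : u j = 0 := by rw [hu j, hμ]; simp
        have : δf j = 0 := by simp [hδf, hl0, hu0]
        simp [hμ, this]
      · by_cases hjS : j ∈ S
        · rw [if_pos (⟨hjS, hμ⟩ : j ∈ S ∧ μ j ≠ 0), if_pos hjS]
          field_simp
        · simp [hjS, hμ]
    rw [Finset.sum_congr rfl fun j _ => key j, Finset.sum_add_distrib]
    congr 1
    rw [Finset.sum_ite_mem, Finset.univ_inter, hsum]
  · intro j hj
    simp only [Set.mem_setOf_eq] at hj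
    by_contra hjS
    simp only [Finset.coe_sort_coe, Finset.mem_coe] at hjS
    apply hj
    simp [hjS]


/-- For binary `y`, the neighbor distance `d(c)` (minimum number of
coordinates of `y` one must change, allowing values in `[0,1]`, to make the dot
product with `μ` equal `c`) satisfies `d(c) ≤ k` iff `μ·y + L_k ≤ c ≤ μ·y + U_k`.
The bound `d(c) ≤ k` is expressed as the existence of a witness `y'` differing from
`y` in at most `k` coordinates. -/
theorem stmt1 {n k : ℕ} (μ y : Fin n → ℝ) (hy : ∀ j, y j = 0 ∨ y j = 1)
    (hk : k ≤ n) (c : ℝ)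
    (u l : Fin n → ℝ)
    (hu : ∀ j, u j = max (μ j * (1 - y j)) (-(μ j * y j)))
    (hl : ∀ j, l j = min (μ j * (1 - y j)) (-(μ j * y j)))
    (U L Un Ln : ℝ)
    (hU : IsGreatest {v | ∃ S : Finset (Fin n), S.card = k ∧ v = ∑ j ∈ S, u j} U)
    (hL : IsLeast {v | ∃ S : Finset (Fin n), S.card = k ∧ v = ∑ j ∈ S, l j} L)
    (hUn : IsGreatest {v | ∃ S : Finset (Fin n), S.card = n ∧ v = ∑ j ∈ S, u j} Un)
    (hLn : IsLeast {v | ∃ S : Finset (Fin n), S.card = n ∧ v = ∑ j ∈ S, l j} Ln)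
    (hattain : (∑ j, μ j * y j) + Ln ≤ c ∧ c ≤ (∑ j, μ j * y j) + Un) :
    (∃ y' : Fin n → ℝ, (∀ j, y' j ∈ Set.Icc (0:ℝ) 1) ∧ (∑ j, μ j * y' j) = c ∧
        {j | y j ≠ y' j}.ncard ≤ k) ↔
      ((∑ j, μ j * y j) + L ≤ c ∧ c ≤ (∑ j, μ j * y j) + U) := by
  have hl0 : ∀ j, l j ≤ 0 := by
    intro j
    rw [hl j]
    rcases hy j with h0 | h0 <;> rw [h0] <;> simp
  have hu0 : ∀ j, 0 ≤ u j := by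
    intro j
    rw [hu j]
    rcases hy j with h0 | h0 <;> rw [h0] <;> simp
  constructor
  · rintro ⟨y', hmem, hc, hcard⟩
    set S₀ : Finset (Fin n) := Finset.univ.filter (fun j => y j ≠ y' j) with hS₀
    have hset : {j | y j ≠ y' j} = ↑S₀ := by
      ext j; simp [hS₀]
    have hS₀k : S₀.card ≤ k := by
      rw [hset, Set.ncard_coe_finset] at hcard
      exact hcard
    obtain ⟨S, hS₀S, hScard⟩ :=
      Finset.exists_superset_card_eq hS₀k (by simpa using hk)
    have hzero : ∀ j ∈ Finset.univ, j ∉ S → μ j * (y' j - y j) = 0 := by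
      intro j _ hjS
      have : j ∉ S₀ := fun h => hjS (hS₀S h)
      have hyy : y j = y' j := by
        by_contra hne
        exact this (by simp [hS₀, hne])
      rw [← hyy]; ring
    have hδeq : ∑ j ∈ S, μ j * (y' j - y j) = c - ∑ j, μ j * y j := by
      rw [Finset.sum_subset (Finset.subset_univ S) hzero, ← hc]
      rw [← Finset.sum_sub_distrib]
      apply Finset.sum_congr rfl
      intro j _
      ring
    have hbound : ∀ j, l j ≤ μ j * (y' j - y j) ∧ μ j * (y' j - y j) ≤ u j := by
      intro j
      have := coord_bound (μ j) (y j) (y' j) (hy j) (hmem j).1 (hmem j).2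
      exact ⟨(hl j) ▸ this.1, (hu j) ▸ this.2⟩
    have hlb : ∑ j ∈ S, l j ≤ c - ∑ j, μ j * y j := by
      rw [← hδeq]
      exact Finset.sum_le_sum fun j _ => (hbound j).1
    have hub : c - ∑ j, μ j * y j ≤ ∑ j ∈ S, u j := by
      rw [← hδeq]
      exact Finset.sum_le_sum fun j _ => (hbound j).2
    have hLS : L ≤ ∑ j ∈ S, l j := hL.2 ⟨S, hScard, rfl⟩
    have hUS : ∑ j ∈ S, u j ≤ U := hU.2 ⟨S, hScard, rfl⟩
    constructor <;> linarith
  · rintro ⟨hcl, hcu⟩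
    set δ : ℝ := c - ∑ j, μ j * y j with hδ
    have key : ∃ S : Finset (Fin n), S.card = k ∧
        (∑ j ∈ S, l j ≤ δ ∧ δ ≤ ∑ j ∈ S, u j) := by
      rcases le_or_gt 0 δ with h0 | h0
      · obtain ⟨S, hScard, hUeq⟩ := hU.1
        exact ⟨S, hScard, le_trans (Finset.sum_nonpos fun j _ => hl0 j) h0,
          by rw [← hUeq]; linarith⟩
      · obtain ⟨S, hScard, hLeq⟩ := hL.1
        exact ⟨S, hScard, by rw [← hLeq]; linarith,
          le_trans h0.le (Finset.sum_nonneg fun j _ => hu0 j)⟩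
    obtain ⟨S, hScard, hlS, huS⟩ := key
    obtain ⟨y', hmem, hsum, hsub⟩ := build μ y u l hy hu hl S δ hlS huS
    refine ⟨y', hmem, by rw [hsum]; simp [hδ], ?_⟩
    calc {j | y j ≠ y' j}.ncard ≤ (↑S : Set (Fin n)).ncard :=
          Set.ncard_le_ncard hsub (S.finite_toSet)
      _ = S.card := Set.ncard_coe_finset S
      _ = k := hScard
end

section
/- Exponential mechanism privacy (single draw): let Ω be a finite set, and let q : Ω × Y → ℝ be a score function with sensitivity Δ, i.e., |q(ω,y) - q(ω,y')| ≤ Δ for all ω and all adjacent y, y'. Define the probability distribution P_y(ω) = exp(ε q(ω,y)/(2Δ)) / Σ_{ω'} exp(ε q(ω',y)/(2Δ)). Then for all adjacent y, y' and all ω ∈ Ω, P_y(ω) ≤ exp(ε) · P_{y'}(ω). -/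
/-- Exponential mechanism privacy (single draw): with score function of
sensitivity `Δ` and output probabilities
`P_y(ω) = exp(ε q(ω,y)/(2Δ)) / Σ_{ω'} exp(ε q(ω',y)/(2Δ))`, for adjacent `y, y'` and
all `ω`, `P_y(ω) ≤ exp(ε) P_{y'}(ω)`. -/
theorem stmt8 {Ω Y : Type*} [Fintype Ω] (adj : Y → Y → Prop)
    (q : Ω → Y → ℝ) (Δ ε : ℝ) (hΔ : 0 < Δ) (hε : 0 < ε)
    (hsens : ∀ (ω : Ω) (y y' : Y), adj y y' → |q ω y - q ω y'| ≤ Δ)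
    (P : Y → Ω → ℝ)
    (hP : ∀ y ω, P y ω =
      Real.exp (ε * q ω y / (2 * Δ)) / ∑ ω' : Ω, Real.exp (ε * q ω' y / (2 * Δ)))
    (y y' : Y) (h : adj y y') (ω : Ω) :
    P y ω ≤ Real.exp ε * P y' ω := by
  have h2Δ : (0:ℝ) < 2 * Δ := by linarith
  have hDpos : ∀ z : Y, 0 < ∑ ω' : Ω, Real.exp (ε * q ω' z / (2 * Δ)) := fun z =>
    Finset.sum_pos (fun i _ => Real.exp_pos _) ⟨ω, Finset.mem_univ ω⟩
  have step : ∀ (a : Ω) (u v : Y), q a u - q a v ≤ Δ →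
      Real.exp (ε * q a u / (2 * Δ)) ≤ Real.exp (ε/2) * Real.exp (ε * q a v / (2 * Δ)) := by
    intro a u v hd
    rw [← Real.exp_add, Real.exp_le_exp, div_le_iff₀ h2Δ, add_mul,
      div_mul_cancel₀ _ (ne_of_gt h2Δ)]
    nlinarith
  have hnum : Real.exp (ε * q ω y / (2 * Δ)) ≤
      Real.exp (ε/2) * Real.exp (ε * q ω y' / (2 * Δ)) :=
    step ω y y' (by linarith [(abs_le.mp (hsens ω y y' h)).2])
  have hden : (∑ ω' : Ω, Real.exp (ε * q ω' y' / (2 * Δ))) ≤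
      Real.exp (ε/2) * ∑ ω' : Ω, Real.exp (ε * q ω' y / (2 * Δ)) := by
    rw [Finset.mul_sum]
    exact Finset.sum_le_sum fun a _ =>
      step a y' y (by linarith [(abs_le.mp (hsens a y y' h)).1])
  set N := Real.exp (ε * q ω y / (2 * Δ))
  set N' := Real.exp (ε * q ω y' / (2 * Δ))
  set D := ∑ ω' : Ω, Real.exp (ε * q ω' y / (2 * Δ))
  set D' := ∑ ω' : Ω, Real.exp (ε * q ω' y' / (2 * Δ))
  rw [hP, hP]
  calc N / D ≤ (Real.exp (ε/2) * N') / D := by gcongr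
    _ = (Real.exp (ε/2) * N') * (1 / D) := by ring
    _ ≤ (Real.exp (ε/2) * N') * (Real.exp (ε/2) / D') := by
        have h1 : 1 / D ≤ Real.exp (ε/2) / D' := by
          rw [div_le_div_iff₀ (hDpos y) (hDpos y')]
          linarith [hden]
        exact mul_le_mul_of_nonneg_left h1 (by positivity)
    _ = Real.exp ε * (N' / D') := by
        rw [show ε = ε/2 + ε/2 by ring, Real.exp_add]
        ring
end

section
/- Let y ∈ {0,1}ⁿ, μ ∈ ℝⁿ, and c ∈ ℝ with μ·y + L_n ≤ c ≤ μ·y + U_n (using the notation of Algorithm 1). If c ∈ [μ·y + L_k, μ·y + U_k] for some k ≤ n, then there exists y' ∈ [0,1]ⁿ with μ·y' = c and y' differing from y in at most k coordinates. -/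
lemma stmt12_aux {n : ℕ} (μ y : Fin n → ℝ) (hy : ∀ j, y j = 0 ∨ y j = 1)
    (S : Finset (Fin n)) (w : Fin n → ℝ)
    (hw : ∀ j ∈ S, w j = μ j * (1 - y j) ∨ w j = -(μ j * y j))
    (d t : ℝ) (ht0 : 0 ≤ t) (ht1 : t ≤ 1) (htd : t * (∑ j ∈ S, w j) = d) :
    ∃ y' : Fin n → ℝ, (∀ j, y' j ∈ Set.Icc (0:ℝ) 1) ∧
      (∑ j, μ j * y' j) = (∑ j, μ j * y j) + d ∧ {j | y j ≠ y' j} ⊆ ↑S := by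
  set s : Fin n → ℝ := fun j => if μ j * (1 - y j) = w j then 1 - y j else -y j with hs
  refine ⟨fun j => if j ∈ S then y j + t * s j else y j, ?_, ?_, ?_⟩
  · intro j
    have hyj : (0:ℝ) ≤ y j ∧ y j ≤ 1 := by rcases hy j with h | h <;> simp [h]
    by_cases hjS : j ∈ S <;> simp only [hjS, if_true, if_false, hs]
    · by_cases hcase : μ j * (1 - y j) = w j
      · rw [if_pos hcase]; constructor <;> nlinarith [hyj.1, hyj.2]
      · rw [if_neg hcase]; constructor <;> nlinarith [hyj.1, hyj.2]
    · exact ⟨hyj.1, hyj.2⟩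
  · have key : ∀ j, μ j * (if j ∈ S then y j + t * s j else y j)
        = μ j * y j + (if j ∈ S then t * w j else 0) := by
      intro j
      by_cases hjS : j ∈ S
      · simp only [hjS, if_true, hs]
        by_cases hcase : μ j * (1 - y j) = w j
        · rw [if_pos hcase, ← hcase]; ring
        · have hwj : w j = -(μ j * y j) :=
            (hw j hjS).resolve_left (fun h => hcase h.symm)
          rw [if_neg hcase, hwj]; ring
      · simp [hjS]
    simp only [key]
    rw [Finset.sum_add_distrib, Finset.sum_ite_mem, Finset.univ_inter,
      ← Finset.mul_sum, htd]
  · intro j hj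
    simp only [Set.mem_setOf_eq] at hj
    by_contra hjS
    simp only [Finset.coe_sort_coe, Finset.mem_coe] at hjS
    exact hj (by simp [hjS])

/-- For binary `y` and `c` with `μ·y + L_n ≤ c ≤ μ·y + U_n`, if
`c ∈ [μ·y + L_k, μ·y + U_k]` then there exists `y' ∈ [0,1]ⁿ` with `μ·y' = c`
differing from `y` in at most `k` coordinates. -/
theorem stmt12 {n k : ℕ} (μ y : Fin n → ℝ) (hy : ∀ j, y j = 0 ∨ y j = 1)
    (hk : k ≤ n) (c : ℝ)
    (u l : Fin n → ℝ)
    (hu : ∀ j, u j = max (μ j * (1 - y j)) (-(μ j * y j)))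
    (hl : ∀ j, l j = min (μ j * (1 - y j)) (-(μ j * y j)))
    (U L Un Ln : ℝ)
    (hU : IsGreatest {v | ∃ S : Finset (Fin n), S.card = k ∧ v = ∑ j ∈ S, u j} U)
    (hL : IsLeast {v | ∃ S : Finset (Fin n), S.card = k ∧ v = ∑ j ∈ S, l j} L)
    (hUn : IsGreatest {v | ∃ S : Finset (Fin n), S.card = n ∧ v = ∑ j ∈ S, u j} Un)
    (hLn : IsLeast {v | ∃ S : Finset (Fin n), S.card = n ∧ v = ∑ j ∈ S, l j} Ln)
    (hattain : (∑ j, μ j * y j) + Ln ≤ c ∧ c ≤ (∑ j, μ j * y j) + Un)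
    (hc : (∑ j, μ j * y j) + L ≤ c ∧ c ≤ (∑ j, μ j * y j) + U) :
    ∃ y' : Fin n → ℝ, (∀ j, y' j ∈ Set.Icc (0:ℝ) 1) ∧ (∑ j, μ j * y' j) = c ∧
      {j | y j ≠ y' j}.ncard ≤ k := by
  set d := c - ∑ j, μ j * y j with hd
  have hu_nonneg : ∀ j, 0 ≤ u j := by
    intro j; rw [hu j]
    rcases hy j with h | h
    · exact le_max_of_le_right (by rw [h]; simp)
    · exact le_max_of_le_left (by rw [h]; simp)
  have hl_nonpos : ∀ j, l j ≤ 0 := by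
    intro j; rw [hl j]
    rcases hy j with h | h
    · exact min_le_of_right_le (by rw [h]; simp)
    · exact min_le_of_left_le (by rw [h]; simp)
  have finish : ∀ (S : Finset (Fin n)) (w : Fin n → ℝ),
      S.card = k → (∀ j ∈ S, w j = μ j * (1 - y j) ∨ w j = -(μ j * y j)) →
      (∀ t0 : ℝ, 0 ≤ t0 → t0 ≤ 1 → t0 * (∑ j ∈ S, w j) = d → True) → -- dummy
      ∀ t : ℝ, 0 ≤ t → t ≤ 1 → t * (∑ j ∈ S, w j) = d →
      ∃ y' : Fin n → ℝ, (∀ j, y' j ∈ Set.Icc (0:ℝ) 1) ∧ (∑ j, μ j * y' j) = c ∧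
        {j | y j ≠ y' j}.ncard ≤ k := by
    intro S w hScard hw _ t ht0 ht1 htd
    obtain ⟨y', h1, h2, h3⟩ := stmt12_aux μ y hy S w hw d t ht0 ht1 htd
    refine ⟨y', h1, by rw [h2, hd]; ring, ?_⟩
    calc {j | y j ≠ y' j}.ncard ≤ (↑S : Set (Fin n)).ncard :=
          Set.ncard_le_ncard h3 S.finite_toSet
      _ = k := by rw [Set.ncard_coe_finset, hScard]
  by_cases hd0 : 0 ≤ d
  · obtain ⟨S, hScard, hSU⟩ := hU.1
    have hwu : ∀ j ∈ S, u j = μ j * (1 - y j) ∨ u j = -(μ j * y j) := by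
      intro j _; rw [hu j]; exact max_choice _ _
    have hdU : d ≤ U := by rw [hd]; linarith [hc.2]
    by_cases hU0 : (∑ j ∈ S, u j) = 0
    · refine finish S u hScard hwu (fun _ _ _ _ => trivial) 0 le_rfl zero_le_one ?_
      have : d = 0 := le_antisymm (by rw [hSU, hU0] at hdU; linarith) hd0
      simp [this]
    · have hUpos : 0 < ∑ j ∈ S, u j := by
        rcases lt_or_eq_of_le (Finset.sum_nonneg fun j _ => hu_nonneg j) with h | h
        · exact h
        · exact absurd h.symm hU0
      refine finish S u hScard hwu (fun _ _ _ _ => trivial)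
        (d / (∑ j ∈ S, u j)) (div_nonneg hd0 hUpos.le) ?_ (div_mul_cancel₀ d hUpos.ne')
      rw [div_le_one hUpos, ← hSU]; exact hdU
  · push_neg at hd0
    obtain ⟨S, hScard, hSL⟩ := hL.1
    have hwl : ∀ j ∈ S, l j = μ j * (1 - y j) ∨ l j = -(μ j * y j) := by
      intro j _; rw [hl j]; exact min_choice _ _
    have hdL : L ≤ d := by rw [hd]; linarith [hc.1]
    have hLneg : ∑ j ∈ S, l j < 0 := by
      rcases lt_or_eq_of_le (Finset.sum_nonpos fun j _ => hl_nonpos j) with h | h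
      · exact h
      · exfalso; rw [hSL] at hdL; linarith
    refine finish S l hScard hwl (fun _ _ _ _ => trivial)
      (d / (∑ j ∈ S, l j)) (div_nonneg_of_nonpos hd0.le hLneg.le) ?_
      (div_mul_cancel₀ d hLneg.ne)
    rw [div_le_one_of_neg hLneg, ← hSL]; exact hdL
end
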